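/- arXiv:2102.09636 — 5 statements merged into one kernel-verified Lean document; each statement's English description precedes it below -/
import Mathlib

section
/- If (U,V) has joint density p(u,v) = (1-u)/(v-u)² · 1_{0<u<1<v}, then V has density p_V(v) = -ln(1 - 1/v) - 1/v for v > 1. -/
open MeasureTheory

lemma inner_integral (v : ℝ) (hv : 1 < v) :
    ∫ u in (0:ℝ)..1, (1 - u) / (v - u) ^ 2 = -Real.log (1 - 1/v) - 1/v := by
  have hv0 : (0:ℝ) < v := lt_trans one_pos hv
  have key : ∀ u ∈ Set.uIcc (0:ℝ) 1, (0:ℝ) < v - u := by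
    intro u hu
    rw [Set.uIcc_of_le (by norm_num : (0:ℝ) ≤ 1)] at hu
    linarith [hu.2]
  have hderiv : ∀ u ∈ Set.uIcc (0:ℝ) 1,
      HasDerivAt (fun u => -Real.log (v - u) - (v - 1) * (v - u)⁻¹)
        ((1 - u) / (v - u) ^ 2) u := by
    intro u hu
    have hvu : (0:ℝ) < v - u := key u hu
    have h1 : HasDerivAt (fun u : ℝ => v - u) (-1) u := by
      simpa using (hasDerivAt_id u).const_sub v
    have h2 : HasDerivAt (fun u : ℝ => Real.log (v - u)) (-1 / (v - u)) u :=
      h1.log hvu.ne'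
    have h3 : HasDerivAt (fun u : ℝ => (v - u)⁻¹) (-(-1) / (v - u) ^ 2) u :=
      h1.inv hvu.ne'
    have h4 := (h2.neg.sub ((h3.const_mul (v - 1))))
    refine h4.congr_deriv ?_
    have hne : v - u ≠ 0 := hvu.ne'
    field_simp
    ring
  have hcont : IntervalIntegrable (fun u => (1 - u) / (v - u) ^ 2) volume 0 1 := by
    apply ContinuousOn.intervalIntegrable
    apply ContinuousOn.div
    · fun_prop
    · fun_prop
    · intro u hu
      exact pow_ne_zero _ (key u hu).ne'
  rw [intervalIntegral.integral_eq_sub_of_hasDerivAt hderiv hcont]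
  have hv1 : v - 1 ≠ 0 := by linarith
  have h11 : (1:ℝ) - 1/v = (v-1)/v := by field_simp
  rw [h11, Real.log_div hv1 hv0.ne']
  field_simp
  simp only [sub_zero]
  field_simp
  ring

lemma marginal_lintegral (v : ℝ) :
    ∫⁻ u, ENNReal.ofReal (if 0 < u ∧ u < 1 ∧ 1 < v then (1 - u) / (v - u) ^ 2 else 0)
      = ENNReal.ofReal (if 1 < v then -Real.log (1 - 1/v) - 1/v else 0) := by
  by_cases hv : 1 < v
  · simp only [hv, and_true, if_true]
    have key : ∀ u ∈ Set.Ioo (0:ℝ) 1, (0:ℝ) < v - u := fun u hu => by linarith [hu.2]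
    have hind : (fun u => ENNReal.ofReal (if 0 < u ∧ u < 1 then (1 - u) / (v - u) ^ 2 else 0))
        = Set.indicator (Set.Ioo 0 1) (fun u => ENNReal.ofReal ((1 - u) / (v - u) ^ 2)) := by
      funext u
      by_cases h : u ∈ Set.Ioo (0:ℝ) 1
      · rw [Set.indicator_of_mem h, if_pos ⟨h.1, h.2⟩]
      · rw [Set.indicator_of_notMem h, if_neg (by simpa [Set.mem_Ioo] using h)]
        simp
    rw [show (∫⁻ u, ENNReal.ofReal (if 0 < u ∧ u < 1 then (1 - u) / (v - u) ^ 2 else 0))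
        = ∫⁻ u, Set.indicator (Set.Ioo 0 1) (fun u => ENNReal.ofReal ((1 - u) / (v - u) ^ 2)) u
      from lintegral_congr fun u => congrFun hind u, lintegral_indicator measurableSet_Ioo]
    have hint : IntegrableOn (fun u => (1 - u) / (v - u) ^ 2) (Set.Ioo 0 1) volume := by
      have hcont : IntervalIntegrable (fun u => (1 - u) / (v - u) ^ 2) volume 0 1 := by
        apply ContinuousOn.intervalIntegrable
        apply ContinuousOn.div
        · fun_prop
        · fun_prop
        · intro u hu
          rw [Set.uIcc_of_le (by norm_num : (0:ℝ) ≤ 1)] at hu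
          have : (0:ℝ) < v - u := by linarith [hu.2]
          exact pow_ne_zero _ this.ne'
      exact ((intervalIntegrable_iff_integrableOn_Ioo_of_le (by norm_num)).mp hcont)
    rw [← ofReal_integral_eq_lintegral_ofReal hint]
    · congr 1
      rw [← MeasureTheory.integral_Ioc_eq_integral_Ioo,
        ← intervalIntegral.integral_of_le (by norm_num : (0:ℝ) ≤ 1)]
      exact inner_integral v hv
    · filter_upwards [ae_restrict_mem measurableSet_Ioo] with u hu
      have h1 : (0:ℝ) ≤ 1 - u := by linarith [hu.2]
      positivity
  · simp [hv]

/-- If (U,V) has joint density p(u,v) = (1-u)/(v-u)²·1_{0<u<1<v}, then V has density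
p_V(v) = -ln(1-1/v) - 1/v for v > 1. -/
theorem stmt2 {Ω : Type*} [MeasurableSpace Ω] (P : Measure Ω) [IsProbabilityMeasure P]
    (U V : Ω → ℝ) (hU : Measurable U) (hV : Measurable V)
    (p : ℝ → ℝ → ℝ)
    (hp : ∀ u v, p u v = if 0 < u ∧ u < 1 ∧ 1 < v then (1 - u) / (v - u) ^ 2 else 0)
    (hjoint : P.map (fun ω => (U ω, V ω)) =
      (volume : Measure (ℝ × ℝ)).withDensity (fun x => ENNReal.ofReal (p x.1 x.2))) :
    P.map V = (volume : Measure ℝ).withDensity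
      (fun v => ENNReal.ofReal (if 1 < v then -Real.log (1 - 1/v) - 1/v else 0)) := by
  have hpeq : (fun x : ℝ × ℝ => p x.1 x.2)
      = fun x : ℝ × ℝ => if 0 < x.1 ∧ x.1 < 1 ∧ 1 < x.2 then (1 - x.1) / (x.2 - x.1) ^ 2 else 0 := by
    funext x; rw [hp]
  have hpm : Measurable fun x : ℝ × ℝ => ENNReal.ofReal (p x.1 x.2) := by
    apply Measurable.ennreal_ofReal
    rw [hpeq]
    apply Measurable.ite
    · exact ((measurableSet_lt measurable_const measurable_fst).inter
        ((measurableSet_lt measurable_fst measurable_const).inter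
          (measurableSet_lt measurable_const measurable_snd)))
    · fun_prop
    · fun_prop
  have h1 : P.map V = ((volume : Measure (ℝ × ℝ)).withDensity
      fun x => ENNReal.ofReal (p x.1 x.2)).map Prod.snd := by
    rw [← hjoint, Measure.map_map measurable_snd (hU.prodMk hV)]
    rfl
  rw [h1]
  ext s hs
  rw [Measure.map_apply measurable_snd hs, withDensity_apply _ (measurable_snd hs),
    withDensity_apply _ hs, ← lintegral_indicator (measurable_snd hs),
    ← lintegral_indicator hs, Measure.volume_eq_prod,
    lintegral_prod_symm _ (hpm.indicator (measurable_snd hs)).aemeasurable]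
  apply lintegral_congr
  intro v
  by_cases hvs : v ∈ s
  · have h2 : ∀ u : ℝ, (Prod.snd ⁻¹' s).indicator (fun x : ℝ × ℝ => ENNReal.ofReal (p x.1 x.2)) (u, v)
        = ENNReal.ofReal (p u v) := fun u => Set.indicator_of_mem (show (u, v) ∈ Prod.snd ⁻¹' s from hvs) _
    simp only [h2, Set.indicator_of_mem hvs]
    simp only [hp]
    exact marginal_lintegral v
  · have h2 : ∀ u : ℝ, (Prod.snd ⁻¹' s).indicator (fun x : ℝ × ℝ => ENNReal.ofReal (p x.1 x.2)) (u, v)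
        = 0 := fun u => Set.indicator_of_notMem (show (u, v) ∉ Prod.snd ⁻¹' s from hvs) _
    simp only [h2, Set.indicator_of_notMem hvs]
    simp
end

section
/- If a random variable V has density p_V(v) = -ln(1 - 1/v) - 1/v on (1,∞), then for all v ≥ 1, P(V > v) = Σ_{n=1}^∞ 1/(n(n+1)vⁿ). -/
open MeasureTheory

private lemma term_integral {v : ℝ} (hv : 1 ≤ v) (n : ℕ) :
    ∫⁻ x in Set.Ioi v, ENNReal.ofReal ((1/x)^(n+2) / ((n:ℝ)+2))
      = ENNReal.ofReal (1 / (((n:ℝ)+1) * ((n:ℝ)+2) * v ^ (n+1))) := by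
  have hv0 : (0:ℝ) < v := lt_of_lt_of_le one_pos hv
  have ha : (-(n+2) : ℝ) < -1 := by
    have : (0:ℝ) ≤ n := Nat.cast_nonneg n
    linarith
  have hInt : IntegrableOn (fun x : ℝ => x ^ (-(n+2) : ℝ)) (Set.Ioi v) :=
    integrableOn_Ioi_rpow_of_lt ha hv0
  have hcong : ∀ x ∈ Set.Ioi v, (1/x)^(n+2) / ((n:ℝ)+2)
      = x ^ (-(n+2) : ℝ) / ((n:ℝ)+2) := by
    intro x hx
    have hx0 : (0:ℝ) < x := lt_trans hv0 hx
    rw [Real.rpow_neg hx0.le, show ((n:ℝ)+2) = ((n+2 : ℕ) : ℝ) by push_cast; ring,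
      Real.rpow_natCast, one_div, inv_pow]
  rw [setLIntegral_congr_fun measurableSet_Ioi
    (fun x hx => by rw [hcong x hx])]
  have hInt2 : IntegrableOn (fun x : ℝ => x ^ (-(n+2) : ℝ) / ((n:ℝ)+2)) (Set.Ioi v) :=
    hInt.div_const _
  rw [← ofReal_integral_eq_lintegral_ofReal hInt2]
  · congr 1
    rw [integral_div, integral_Ioi_rpow_of_lt ha hv0]
    have hval : v ^ ((-(n+2) : ℝ) + 1) = (v ^ (n+1))⁻¹ := by
      rw [show (-(n+2) : ℝ) + 1 = -((n+1:ℕ):ℝ) by push_cast; ring,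
        Real.rpow_neg hv0.le, Real.rpow_natCast]
    rw [hval, show (-(n+2) : ℝ) + 1 = -((n:ℝ)+1) by ring]
    have h2 : ((n:ℝ)+1) ≠ 0 := by positivity
    have h3 : ((n:ℝ)+2) ≠ 0 := by positivity
    have h4 : v ^ (n+1) ≠ 0 := by positivity
    rw [neg_div_neg_eq, div_div]
    field_simp
  · filter_upwards [self_mem_ae_restrict measurableSet_Ioi] with x hx
    have hx0 : (0:ℝ) < x := lt_trans hv0 hx
    positivity

/-- If V has density p_V(v) = -ln(1-1/v) - 1/v on (1,∞), then for v ≥ 1,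
P(V > v) = Σ_{n=1}^∞ 1/(n(n+1)vⁿ). -/
theorem stmt3 {Ω : Type*} [MeasurableSpace Ω] (P : Measure Ω) [IsProbabilityMeasure P]
    (V : Ω → ℝ) (hV : Measurable V)
    (hlaw : P.map V = (volume : Measure ℝ).withDensity
      (fun v => ENNReal.ofReal (if 1 < v then -Real.log (1 - 1/v) - 1/v else 0))) :
    ∀ v : ℝ, 1 ≤ v →
      (P {ω | v < V ω}).toReal
        = ∑' n : ℕ, 1 / (((n:ℝ)+1) * ((n:ℝ)+2) * v ^ (n+1)) := by
  intro v hv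
  have hv0 : (0:ℝ) < v := lt_of_lt_of_le one_pos hv
  have h1 : P {ω | v < V ω} = (P.map V) (Set.Ioi v) := by
    rw [Measure.map_apply hV measurableSet_Ioi]; rfl
  rw [h1, hlaw, withDensity_apply _ measurableSet_Ioi]
  -- pointwise series expansion on Ioi v
  have hint : ∀ x ∈ Set.Ioi v,
      ENNReal.ofReal (if 1 < x then -Real.log (1-1/x) - 1/x else 0)
        = ∑' n : ℕ, ENNReal.ofReal ((1/x)^(n+2) / ((n:ℝ)+2)) := by
    intro x hx
    have hx1 : 1 < x := lt_of_le_of_lt hv hx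
    rw [if_pos hx1]
    have hy0 : 0 < 1/x := by positivity
    have hy1 : 1/x < 1 := by rw [div_lt_one (by linarith)]; linarith
    have h := Real.hasSum_pow_div_log_of_abs_lt_one (x := 1/x)
      (by rw [abs_of_pos hy0]; exact hy1)
    have h2 : HasSum (fun n : ℕ => (1/x)^(n+2) / ((n:ℝ)+2))
        (-Real.log (1-1/x) - 1/x) := by
      have h3 := (hasSum_nat_add_iff' (f := fun n : ℕ => (1/x)^(n+1) / ((n:ℕ)+1 : ℝ)) 1).mpr h
      simp only [Finset.range_one, Finset.sum_singleton] at h3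
      convert h3 using 2 with n
      case e'_3 => rfl
      · push_cast; ring_nf
      · norm_num
    rw [← h2.tsum_eq]
    rw [ENNReal.ofReal_tsum_of_nonneg (fun n => by positivity) h2.summable]
  rw [setLIntegral_congr_fun measurableSet_Ioi
    (fun x hx => hint x hx)]
  rw [lintegral_tsum (fun n => by
    apply Measurable.aemeasurable
    apply ENNReal.measurable_ofReal.comp
    fun_prop)]
  have hterm : ∀ n : ℕ, ∫⁻ x in Set.Ioi v, ENNReal.ofReal ((1/x)^(n+2) / ((n:ℝ)+2))
      = ENNReal.ofReal (1 / (((n:ℝ)+1) * ((n:ℝ)+2) * v ^ (n+1))) := term_integral hv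
  rw [tsum_congr hterm]
  have hsummable : Summable (fun n : ℕ => 1 / (((n:ℝ)+1) * ((n:ℝ)+2) * v ^ (n+1))) := by
    have hg : Summable (fun n : ℕ => 1 / ((n:ℝ)+1) ^ 2) := by
      have := (summable_nat_add_iff 1).mpr (Real.summable_one_div_nat_pow.mpr (le_refl 2))
      convert this using 2 with n
      case e'_3 => rfl
      push_cast; ring_nf
    refine Summable.of_nonneg_of_le (fun n => by positivity) (fun n => ?_) hg
    apply one_div_le_one_div_of_le (by positivity)
    have hvp : (1:ℝ) ≤ v ^ (n+1) := one_le_pow₀ hv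
    nlinarith [Nat.cast_nonneg (α := ℝ) n]
  rw [← ENNReal.ofReal_tsum_of_nonneg (fun n => by positivity) hsummable,
    ENNReal.toReal_ofReal (tsum_nonneg (fun n => by positivity))]
end

section
/- Let (T_i')_{i≥1} be i.i.d. positive random variables with P(T_1' ≥ t) ≤ c₁/ln t for all t > 1 and some c₁ > 0. Fix r_+ > 1 and 1 < a < e. Then there is a constant c > 0 such that for every sequence δ(k) → 0 with δ(k) > 0, eventually in k: P[k·max_{i≤k} r_+^{i-1}·T_i' ≥ e^{k/δ(k)}] ≤ c·δ(k). -/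
open MeasureTheory ProbabilityTheory

/-- If (T_i') are i.i.d. positive with P(T' ≥ t) ≤ c₁/ln t for t > 1, and r₊ > 1, then
there is c > 0 such that for every positive sequence δ(k) → 0, eventually in k,
P[k·max_{1≤i≤k} r₊^{i-1} T_i' ≥ e^{k/δ(k)}] ≤ c·δ(k). -/
theorem stmt12 {Ω : Type*} [MeasurableSpace Ω] (P : Measure Ω) [IsProbabilityMeasure P]
    (T' : ℕ → Ω → ℝ) (hmeas : ∀ i, Measurable (T' i))
    (hindep : iIndepFun T' P)
    (hident : ∀ i, IdentDistrib (T' i) (T' 1) P P)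
    (hpos : ∀ i, ∀ᵐ ω ∂P, 0 < T' i ω)
    (c₁ : ℝ) (hc₁ : 0 < c₁)
    (htail : ∀ t : ℝ, 1 < t → (P {ω | t ≤ T' 1 ω}).toReal ≤ c₁ / Real.log t)
    (rp : ℝ) (hrp : 1 < rp) :
    ∃ c > 0, ∀ δ : ℕ → ℝ, (∀ k, 0 < δ k) → Filter.Tendsto δ Filter.atTop (nhds 0) →
      ∀ᶠ k : ℕ in Filter.atTop,
        (P {ω | ∃ i, 1 ≤ i ∧ i ≤ k ∧
            Real.exp ((k:ℝ) / δ k) ≤ (k:ℝ) * (rp ^ (i-1) * T' i ω)}).toReal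
          ≤ c * δ k := by
  have hrp0 : (0:ℝ) < rp := lt_trans one_pos hrp
  have hlr : 0 < Real.log rp := Real.log_pos hrp
  refine ⟨2 * c₁, by positivity, ?_⟩
  intro δ hδpos hδ0
  have hε : (0:ℝ) < 1 / (2 * (1 + Real.log rp)) := by positivity
  filter_upwards [hδ0.eventually (gt_mem_nhds hε), Filter.eventually_ge_atTop 1]
    with k hδk hk1
  have hkpos : (0:ℝ) < k := by exact_mod_cast hk1
  have hδkpos : 0 < δ k := hδpos k
  set t : ℕ → ℝ := fun i => Real.exp ((k:ℝ)/δ k) / ((k:ℝ) * rp ^ (i-1)) with ht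
  have htpos : ∀ i, 0 < t i := fun i => by positivity
  -- the event is contained in the union of tail events
  have hsub : {ω | ∃ i, 1 ≤ i ∧ i ≤ k ∧
      Real.exp ((k:ℝ) / δ k) ≤ (k:ℝ) * (rp ^ (i-1) * T' i ω)}
      ⊆ ⋃ i ∈ Finset.Icc 1 k, T' i ⁻¹' Set.Ici (t i) := by
    intro ω hω
    obtain ⟨i, hi1, hik, hle⟩ := hω
    refine Set.mem_biUnion (Finset.mem_Icc.2 ⟨hi1, hik⟩) ?_
    simp only [Set.mem_preimage, Set.mem_Ici, ht]
    rw [div_le_iff₀ (by positivity)]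
    nlinarith [hle]
  -- log lower bound on thresholds
  have hlogt : ∀ i ∈ Finset.Icc 1 k, (k:ℝ) / (2 * δ k) ≤ Real.log (t i) := by
    intro i hi
    obtain ⟨hi1, hik⟩ := Finset.mem_Icc.1 hi
    have h1 : Real.log (t i)
        = (k:ℝ)/δ k - (Real.log k + ((i-1:ℕ):ℝ) * Real.log rp) := by
      rw [ht]
      rw [Real.log_div (Real.exp_ne_zero _) (by positivity),
        Real.log_exp, Real.log_mul (by positivity) (by positivity), Real.log_pow]
    have h2 : Real.log (k:ℝ) ≤ (k:ℝ) := Real.log_le_self (le_of_lt hkpos)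
    have h3 : ((i-1:ℕ):ℝ) ≤ (k:ℝ) := by
      exact_mod_cast Nat.le_trans (Nat.sub_le i 1) hik
    have h4 : ((i-1:ℕ):ℝ) * Real.log rp ≤ (k:ℝ) * Real.log rp := by
      exact mul_le_mul_of_nonneg_right h3 (le_of_lt hlr)
    have h5 : 1 + Real.log rp ≤ 1 / (2 * δ k) := by
      rw [le_div_iff₀ (by positivity)]
      rw [lt_div_iff₀ (by positivity)] at hδk
      nlinarith
    have h6 : (k:ℝ) * (1 + Real.log rp) ≤ (k:ℝ) / (2 * δ k) := by
      rw [div_eq_mul_inv, ← one_div]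
      exact mul_le_mul_of_nonneg_left h5 (le_of_lt hkpos)
    have h7 : (k:ℝ)/δ k - (k:ℝ)/(2 * δ k) = (k:ℝ)/(2 * δ k) := by
      field_simp; ring
    rw [h1]
    have : Real.log (k:ℝ) + ((i-1:ℕ):ℝ) * Real.log rp ≤ (k:ℝ)/(2*δ k) := by
      calc Real.log (k:ℝ) + ((i-1:ℕ):ℝ) * Real.log rp
          ≤ (k:ℝ) + (k:ℝ) * Real.log rp := add_le_add h2 h4
        _ = (k:ℝ) * (1 + Real.log rp) := by ring
        _ ≤ (k:ℝ)/(2*δ k) := h6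
    linarith [h7]
  have hlogpos : ∀ i ∈ Finset.Icc 1 k, 0 < Real.log (t i) := fun i hi =>
    lt_of_lt_of_le (by positivity) (hlogt i hi)
  have ht1 : ∀ i ∈ Finset.Icc 1 k, 1 < t i := by
    intro i hi
    have := hlogpos i hi
    calc (1:ℝ) = Real.exp 0 := (Real.exp_zero).symm
      _ < Real.exp (Real.log (t i)) := Real.exp_lt_exp.2 this
      _ = t i := Real.exp_log (htpos i)
  -- individual bound
  have hterm : ∀ i ∈ Finset.Icc 1 k,
      (P (T' i ⁻¹' Set.Ici (t i))).toReal ≤ 2 * c₁ * δ k / k := by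
    intro i hi
    have heq : P (T' i ⁻¹' Set.Ici (t i)) = P (T' 1 ⁻¹' Set.Ici (t i)) :=
      (hident i).measure_mem_eq measurableSet_Ici
    have hset : T' 1 ⁻¹' Set.Ici (t i) = {ω | t i ≤ T' 1 ω} := rfl
    rw [heq, hset]
    calc (P {ω | t i ≤ T' 1 ω}).toReal ≤ c₁ / Real.log (t i) := htail _ (ht1 i hi)
      _ ≤ c₁ / ((k:ℝ)/(2*δ k)) := by
          apply div_le_div_of_nonneg_left (le_of_lt hc₁) (by positivity) (hlogt i hi)
      _ = 2 * c₁ * δ k / k := by field_simp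
  -- union bound
  have hub : P {ω | ∃ i, 1 ≤ i ∧ i ≤ k ∧
      Real.exp ((k:ℝ) / δ k) ≤ (k:ℝ) * (rp ^ (i-1) * T' i ω)}
      ≤ ∑ i ∈ Finset.Icc 1 k, P (T' i ⁻¹' Set.Ici (t i)) :=
    (measure_mono hsub).trans (measure_biUnion_finset_le _ _)
  have hsumne : (∑ i ∈ Finset.Icc 1 k, P (T' i ⁻¹' Set.Ici (t i))) ≠ ⊤ :=
    (ENNReal.sum_lt_top.2 fun i _ => measure_lt_top P _).ne
  calc (P {ω | ∃ i, 1 ≤ i ∧ i ≤ k ∧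
        Real.exp ((k:ℝ) / δ k) ≤ (k:ℝ) * (rp ^ (i-1) * T' i ω)}).toReal
      ≤ (∑ i ∈ Finset.Icc 1 k, P (T' i ⁻¹' Set.Ici (t i))).toReal :=
        ENNReal.toReal_mono hsumne hub
    _ = ∑ i ∈ Finset.Icc 1 k, (P (T' i ⁻¹' Set.Ici (t i))).toReal :=
        ENNReal.toReal_sum fun i _ => measure_ne_top P _
    _ ≤ ∑ i ∈ Finset.Icc 1 k, (2 * c₁ * δ k / k) := Finset.sum_le_sum hterm
    _ = (Finset.Icc 1 k).card * (2 * c₁ * δ k / k) := by rw [Finset.sum_const]; simp [nsmul_eq_mul]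
    _ = (k:ℝ) * (2 * c₁ * δ k / k) := by simp [Nat.card_Icc]
    _ = 2 * c₁ * δ k := by field_simp
end

section
/- Let (S_n)_{n≥1} be random variables such that for all 1 ≤ n < m there is a decomposition S_m = c_{n,m}·S_n + S_{n+1}^m with c_{n,m} > 0, where S_{n+1}^m is independent of S_n and equal in law to S_{m-n}. Let (t_n) be non-increasing positive reals with Σ_n P[S_n ≤ t_n] = ∞ and suppose S_n, S_{n+1}^m ≥ 0. Then P[S_n ≤ t_n infinitely often] ≥ 1/4. -/
open MeasureTheory ProbabilityTheory

open scoped ENNReal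


lemma cs_aux {Ω : Type*} [MeasurableSpace Ω] (P : Measure Ω) (X : Ω → ℝ≥0∞)
    (hX : Measurable X) {U : Set Ω} (hU : MeasurableSet U)
    (hsupp : ∀ ω, ω ∉ U → X ω = 0) :
    (∫⁻ ω, X ω ∂P) ^ 2 ≤ (∫⁻ ω, (X ω) ^ 2 ∂P) * P U := by
  have hconj : Real.HolderConjugate 2 2 := ⟨by norm_num, by norm_num, by norm_num⟩
  have hind : Measurable (U.indicator (1 : Ω → ℝ≥0∞)) := measurable_one.indicator hU
  have h2 := ENNReal.lintegral_mul_le_Lp_mul_Lq P hconj hX.aemeasurable hind.aemeasurable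
  have h3 : ∫⁻ ω, (U.indicator (1:Ω→ℝ≥0∞) ω) ^ (2:ℝ) ∂P = P U := by
    have : ∀ ω, (U.indicator (1:Ω→ℝ≥0∞) ω) ^ (2:ℝ) = U.indicator 1 ω := by
      intro ω; by_cases h : ω ∈ U <;>
        simp [Set.indicator_of_mem, Set.indicator_of_notMem, h, ENNReal.rpow_two]
    simp_rw [this]
    exact lintegral_indicator_one hU
  have h4 : ∫⁻ ω, (X ω) ^ (2:ℝ) ∂P = ∫⁻ ω, (X ω) ^ 2 ∂P := by
    simp_rw [ENNReal.rpow_two]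
  rw [h3, h4] at h2
  have h5 : ∫⁻ ω, X ω ∂P ≤ (∫⁻ ω, (X ω)^2 ∂P) ^ ((1:ℝ)/2) * (P U) ^ ((1:ℝ)/2) := by
    refine le_trans (le_of_eq (lintegral_congr fun ω => ?_)) h2
    by_cases h : ω ∈ U
    · simp [Set.indicator_of_mem h]
    · simp [Set.indicator_of_notMem h, hsupp ω h]
  have key : ∀ a : ℝ≥0∞, (a ^ ((1:ℝ)/2)) ^ (2:ℕ) = a := by
    intro a
    rw [← ENNReal.rpow_natCast (a ^ ((1:ℝ)/2)) 2, ← ENNReal.rpow_mul]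
    norm_num
  calc (∫⁻ ω, X ω ∂P) ^ 2
      ≤ ((∫⁻ ω, (X ω)^2 ∂P) ^ ((1:ℝ)/2) * (P U) ^ ((1:ℝ)/2)) ^ 2 :=
        pow_le_pow_left' h5 2
    _ = (∫⁻ ω, (X ω)^2 ∂P) * P U := by rw [mul_pow, key, key]

/-- If nonnegative random variables (S_n) admit for 1 ≤ n < m a decomposition
S_m = c·S_n + S' with c > 0, S' ≥ 0 independent of S_n and distributed as S_{m-n},
and (t_n) are non-increasing positive reals with Σ_{n≥1} P[S_n ≤ t_n] = ∞, then
P[S_n ≤ t_n infinitely often] ≥ 1/4. -/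
theorem stmt13 {Ω : Type*} [MeasurableSpace Ω] (P : Measure Ω) [IsProbabilityMeasure P]
    (S : ℕ → Ω → ℝ) (hmeas : ∀ n, Measurable (S n))
    (hnonneg : ∀ n ω, 0 ≤ S n ω)
    (hdecomp : ∀ n m : ℕ, 1 ≤ n → n < m → ∃ c : ℝ, 0 < c ∧ ∃ S' : Ω → ℝ,
      Measurable S' ∧ (∀ ω, 0 ≤ S' ω) ∧ (∀ ω, S m ω = c * S n ω + S' ω) ∧
      IndepFun (S n) S' P ∧ IdentDistrib S' (S (m - n)) P P)
    (t : ℕ → ℝ) (htpos : ∀ n, 0 < t n) (htmono : Antitone t)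
    (hdiv : ¬ Summable (fun n : ℕ => (P {ω | S (n+1) ω ≤ t (n+1)}).toReal)) :
    (1:ℝ)/4 ≤ (P {ω | ∀ N : ℕ, ∃ n ≥ N, S n ω ≤ t n}).toReal := by
  set A : ℕ → Set Ω := fun n => {ω | S n ω ≤ t n} with hA
  have hAmeas : ∀ n, MeasurableSet (A n) := fun n =>
    measurableSet_le (hmeas n) measurable_const
  set q : ℕ → ℝ≥0∞ := fun n => P (A n) with hq
  have hq1 : ∀ n, q n ≤ 1 := fun n => prob_le_one
  -- pairwise bound
  have hpair : ∀ n m : ℕ, 1 ≤ n → n < m → P (A n ∩ A m) ≤ q n * q (m - n) := by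
    intro n m hn hnm
    obtain ⟨c, hc, S', hS'm, hS'nn, heq, hindep, hid⟩ := hdecomp n m hn hnm
    have hsub : A n ∩ A m ⊆ (S n ⁻¹' Set.Iic (t n)) ∩ (S' ⁻¹' Set.Iic (t (m - n))) := by
      rintro ω ⟨h1, h2⟩
      refine ⟨h1, ?_⟩
      have h3 : S' ω ≤ t m := by
        have := heq ω
        nlinarith [hnonneg n ω, hc.le, h2.out]
      exact h3.trans (htmono (Nat.sub_le m n))
    calc P (A n ∩ A m) ≤ P ((S n ⁻¹' Set.Iic (t n)) ∩ (S' ⁻¹' Set.Iic (t (m - n)))) :=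
          measure_mono hsub
      _ = P (S n ⁻¹' Set.Iic (t n)) * P (S' ⁻¹' Set.Iic (t (m - n))) :=
          hindep.measure_inter_preimage_eq_mul _ _ measurableSet_Iic measurableSet_Iic
      _ = q n * q (m - n) := by
          rw [hid.measure_mem_eq measurableSet_Iic]
          rfl
  -- divergence in ENNReal
  have htop : (∑' i : ℕ, q (i + 1)) = ∞ := by
    by_contra h
    exact hdiv (ENNReal.summable_toReal h)
  set T : ℕ → ℝ≥0∞ := fun k => ∑ i ∈ Finset.range k, q (i + 1) with hT
  have hTfin : ∀ k, T k ≠ ∞ := by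
    intro k
    refine ne_of_lt (lt_of_le_of_lt (Finset.sum_le_sum fun i _ => hq1 (i+1)) ?_)
    simp [lt_top_iff_ne_top]
  have hTtendsto : Filter.Tendsto T Filter.atTop (nhds ∞) := by
    rw [← htop]
    exact ENNReal.tendsto_nat_tsum _
  -- main estimate for each N
  have hmain : ∀ N : ℕ, (1:ℝ≥0∞)/4 ≤ P (⋃ i ∈ {i : ℕ | N ≤ i}, A (i + 1)) := by
    intro N
    -- choose k with k ≥ N and T k ≥ 3 * T N + 1
    have hTmono : Monotone T := by
      intro a b hab
      exact Finset.sum_le_sum_of_subset (Finset.range_subset_range.mpr hab)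
    obtain ⟨k, hkN, hTk⟩ : ∃ k, N ≤ k ∧ 3 * T N + 1 ≤ T k := by
      have hlt : 3 * T N + 1 < ⊤ := by
        have := hTfin N
        finiteness
      have hsup : (⨆ k, T k) = ⊤ := by
        rw [hT]
        simp_rw [← ENNReal.tsum_eq_iSup_nat]
        exact htop
      obtain ⟨k, hk⟩ : ∃ k, 3 * T N + 1 < T k := by
        rw [← hsup] at hlt
        exact lt_iSup_iff.mp hlt
      exact ⟨max k N, le_max_right _ _, hk.le.trans (hTmono (le_max_left _ _))⟩
    set I : Finset ℕ := Finset.Ico N k with hI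
    set s : ℝ≥0∞ := ∑ i ∈ I, q (i + 1) with hs
    have hTks : T k = T N + s := by
      have h0 : ∑ i ∈ Finset.Ico 0 N, q (i+1) + ∑ i ∈ Finset.Ico N k, q (i+1)
          = ∑ i ∈ Finset.Ico 0 k, q (i+1) :=
        Finset.sum_Ico_consecutive _ (Nat.zero_le N) hkN
      rw [hT, hs, hI]
      simp only [Finset.range_eq_Ico]
      exact h0.symm
    have hslb : 2 * T N + 1 ≤ s := by
      have h1 : T N + (2 * T N + 1) ≤ T N + s := by
        calc T N + (2 * T N + 1) = 3 * T N + 1 := by ring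
        _ ≤ T k := hTk
        _ = T N + s := hTks
      exact (ENNReal.add_le_add_iff_left (hTfin N)).mp h1
    have hsne : s ≠ 0 := by
      intro h
      rw [h] at hslb
      simp at hslb
    have hsfin : s ≠ ∞ := by
      refine ne_of_lt (lt_of_le_of_lt (Finset.sum_le_sum fun i _ => hq1 (i+1)) ?_)
      simp [lt_top_iff_ne_top]
    -- the random count X over indices in I
    set X : Ω → ℝ≥0∞ := fun ω => ∑ i ∈ I, (A (i+1)).indicator (1:Ω→ℝ≥0∞) ω with hX
    have hind_meas : ∀ i : ℕ, Measurable ((A (i+1)).indicator (1:Ω→ℝ≥0∞)) :=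
      fun i => measurable_one.indicator (hAmeas (i+1))
    have hXmeas : Measurable X := Finset.measurable_sum I (fun i _ => hind_meas i)
    set Uf : Set Ω := ⋃ i ∈ (I : Set ℕ), A (i+1) with hUf
    have hUfmeas : MeasurableSet Uf :=
      MeasurableSet.biUnion I.countable_toSet (fun i _ => hAmeas (i+1))
    have hsupp : ∀ ω, ω ∉ Uf → X ω = 0 := by
      intro ω hω
      rw [hX]
      refine Finset.sum_eq_zero fun i hi => ?_
      have : ω ∉ A (i+1) := fun hmem => hω (Set.mem_biUnion hi hmem)
      simp [Set.indicator_of_notMem this]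
    have hintX : ∫⁻ ω, X ω ∂P = s := by
      rw [hX, hs]
      rw [lintegral_finset_sum I (fun i _ => hind_meas i)]
      exact Finset.sum_congr rfl fun i _ => lintegral_indicator_one (hAmeas (i+1))
    have hprod : ∀ (sU sV : Set Ω) (ω : Ω),
        sU.indicator (1:Ω→ℝ≥0∞) ω * sV.indicator 1 ω = (sU ∩ sV).indicator 1 ω := by
      intro sU sV ω
      by_cases h1 : ω ∈ sU <;> by_cases h2 : ω ∈ sV <;>
        simp [Set.indicator_apply, h1, h2, Set.mem_inter_iff]
    have hintX2 : ∫⁻ ω, (X ω) ^ 2 ∂P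
        = ∑ i ∈ I, ∑ j ∈ I, P (A (i+1) ∩ A (j+1)) := by
      have hpt : ∀ ω, (X ω) ^ 2
          = ∑ i ∈ I, ∑ j ∈ I, (A (i+1) ∩ A (j+1)).indicator (1:Ω→ℝ≥0∞) ω := by
        intro ω
        rw [hX, sq, Finset.sum_mul_sum]
        exact Finset.sum_congr rfl fun i _ => Finset.sum_congr rfl fun j _ => hprod _ _ ω
      simp_rw [hpt]
      rw [lintegral_finset_sum I (fun i _ => Finset.measurable_sum I
        (fun j _ => measurable_one.indicator ((hAmeas (i+1)).inter (hAmeas (j+1)))))]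
      refine Finset.sum_congr rfl fun i _ => ?_
      rw [lintegral_finset_sum I
        (fun j _ => measurable_one.indicator ((hAmeas (i+1)).inter (hAmeas (j+1))))]
      exact Finset.sum_congr rfl fun j _ =>
        lintegral_indicator_one ((hAmeas (i+1)).inter (hAmeas (j+1)))
    -- bound the double sum
    have hlt_bound : ∀ (f : ℕ → ℝ≥0∞), (∀ n, f n = q n) →
        (∑ i ∈ I, ∑ j ∈ I, (if i < j then f (i+1) * f (j-i) else 0)) ≤ s * T k := by
      intro f hf
      have hinner : ∀ i ∈ I, (∑ j ∈ I, (if i < j then f (i+1) * f (j-i) else 0))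
          ≤ q (i+1) * T k := by
        intro i hi
        have h1 : (∑ j ∈ I, (if i < j then f (i+1) * f (j-i) else 0))
            = q (i+1) * ∑ j ∈ I, (if i < j then q (j-i) else 0) := by
          rw [Finset.mul_sum]
          refine Finset.sum_congr rfl fun j _ => ?_
          by_cases h : i < j <;> simp [h, hf]
        rw [h1]
        refine mul_le_mul_right ?_ _
        calc (∑ j ∈ I, (if i < j then q (j-i) else 0))
            = ∑ j ∈ I.filter (fun j => i < j), q (j-i) := (Finset.sum_filter _ _).symm
          _ ≤ ∑ j ∈ Finset.Ico (i+1) k, q (j-i) := by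
              refine Finset.sum_le_sum_of_subset ?_
              intro j hj
              simp only [Finset.mem_filter, hI, Finset.mem_Ico] at hj ⊢
              omega
          _ = ∑ e ∈ Finset.range (k-(i+1)), q ((i+1)+e-i) := Finset.sum_Ico_eq_sum_range _ _ _
          _ = ∑ e ∈ Finset.range (k-(i+1)), q (e+1) := by
              refine Finset.sum_congr rfl fun e _ => ?_
              congr 1
              omega
          _ ≤ T k := Finset.sum_le_sum_of_subset (Finset.range_subset_range.mpr (by omega))
      calc (∑ i ∈ I, ∑ j ∈ I, (if i < j then f (i+1) * f (j-i) else 0))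
          ≤ ∑ i ∈ I, q (i+1) * T k := Finset.sum_le_sum hinner
        _ = s * T k := by rw [hs, Finset.sum_mul]
    have hD : (∑ i ∈ I, ∑ j ∈ I, P (A (i+1) ∩ A (j+1))) ≤ s * (1 + 2 * T k) := by
      have hterm : ∀ i ∈ I, ∀ j ∈ I, P (A (i+1) ∩ A (j+1))
          ≤ (if i = j then q (i+1) else 0)
            + ((if i < j then q (i+1) * q (j-i) else 0)
              + (if j < i then q (j+1) * q (i-j) else 0)) := by
        intro i _ j _
        rcases lt_trichotomy i j with h | h | h
        · have hb := hpair (i+1) (j+1) (by omega) (by omega)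
          have : (j+1) - (i+1) = j - i := by omega
          rw [this] at hb
          simp [h, h.ne, not_lt.mpr h.le]
          exact hb
        · subst h
          have hle : P (A (i+1) ∩ A (i+1)) ≤ q (i+1) := measure_mono Set.inter_subset_left
          simpa using hle
        · have hb := hpair (j+1) (i+1) (by omega) (by omega)
          have : (i+1) - (j+1) = i - j := by omega
          rw [this] at hb
          rw [Set.inter_comm]
          simp [h, h.ne', not_lt.mpr h.le]
          exact hb
      calc (∑ i ∈ I, ∑ j ∈ I, P (A (i+1) ∩ A (j+1)))
          ≤ ∑ i ∈ I, ∑ j ∈ I, ((if i = j then q (i+1) else 0)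
            + ((if i < j then q (i+1) * q (j-i) else 0)
              + (if j < i then q (j+1) * q (i-j) else 0))) :=
            Finset.sum_le_sum fun i hi => Finset.sum_le_sum fun j hj => hterm i hi j hj
        _ = (∑ i ∈ I, ∑ j ∈ I, (if i = j then q (i+1) else 0))
            + ((∑ i ∈ I, ∑ j ∈ I, (if i < j then q (i+1) * q (j-i) else 0))
              + (∑ i ∈ I, ∑ j ∈ I, (if j < i then q (j+1) * q (i-j) else 0))) := by
            simp_rw [Finset.sum_add_distrib]
        _ ≤ s + (s * T k + s * T k) := by
            refine add_le_add (le_of_eq ?_) (add_le_add ?_ ?_)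
            · rw [hs]
              refine Finset.sum_congr rfl fun i hi => ?_
              simp [Finset.sum_ite_eq, hi]
            · exact hlt_bound q (fun _ => rfl)
            · rw [Finset.sum_comm]
              exact hlt_bound q (fun _ => rfl)
        _ = s * (1 + 2 * T k) := by ring
    -- Cauchy-Schwarz
    have hcs := cs_aux P X hXmeas hUfmeas hsupp
    rw [hintX, hintX2] at hcs
    have hcs2 : s * s ≤ s * s * (4 * P Uf) := by
      have h14 : 1 + 2 * T k ≤ 4 * s := by
        calc 1 + 2 * T k = (1 + 2 * T N) + 2 * s := by rw [hTks]; ring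
          _ ≤ s + 2 * s := by
              refine add_le_add ?_ le_rfl
              calc 1 + 2 * T N = 2 * T N + 1 := by ring
                _ ≤ s := hslb
          _ ≤ 4 * s := by
              calc s + 2 * s = 3 * s := by ring
                _ ≤ 4 * s := mul_le_mul_left (by norm_num) s
      calc s * s = s ^ 2 := (sq s).symm
        _ ≤ (∑ i ∈ I, ∑ j ∈ I, P (A (i+1) ∩ A (j+1))) * P Uf := hcs
        _ ≤ (s * (1 + 2 * T k)) * P Uf := mul_le_mul_left hD _
        _ ≤ (s * (4 * s)) * P Uf := mul_le_mul_left (mul_le_mul_right h14 s) _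
        _ = s * s * (4 * P Uf) := by ring
    have hfour : (1:ℝ≥0∞) ≤ 4 * P Uf := by
      have hss0 : s * s ≠ 0 := mul_ne_zero hsne hsne
      have hssfin : s * s ≠ ∞ := ENNReal.mul_ne_top hsfin hsfin
      have h' : s * s * 1 ≤ s * s * (4 * P Uf) := by
        rw [mul_one]
        exact hcs2
      exact (ENNReal.mul_le_mul_iff_right hss0 hssfin).mp h' 
    have hUfle : (1:ℝ≥0∞)/4 ≤ P Uf := by
      rw [ENNReal.div_le_iff_le_mul (Or.inl (by norm_num)) (Or.inl (by norm_num))]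
      rw [mul_comm] at hfour
      exact hfour
    refine le_trans hUfle (measure_mono ?_)
    intro ω hω
    rw [hUf] at hω
    simp only [Set.mem_iUnion, Finset.coe_sort_coe, Set.mem_setOf_eq] at hω ⊢
    obtain ⟨i, hi, hmem⟩ := hω
    rw [hI] at hi
    simp only [Finset.coe_Ico, Set.mem_Ico] at hi
    exact ⟨i, hi.1, hmem⟩
  -- conclusion
  set V : ℕ → Set Ω := fun N => ⋃ i ∈ {i : ℕ | N ≤ i}, A (i+1) with hV
  have hVmeas : ∀ N, MeasurableSet (V N) :=
    fun N => MeasurableSet.biUnion (Set.to_countable _) (fun i _ => hAmeas (i+1))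
  have hVanti : Antitone V := by
    intro a b hab ω hω
    simp only [hV, Set.mem_iUnion, Set.mem_setOf_eq] at hω ⊢
    obtain ⟨i, hi, hmem⟩ := hω
    exact ⟨i, hab.trans hi, hmem⟩
  have hset : {ω | ∀ N : ℕ, ∃ n ≥ N, S n ω ≤ t n} = ⋂ N, V N := by
    ext ω
    simp only [hV, Set.mem_iInter, Set.mem_iUnion, Set.mem_setOf_eq]
    constructor
    · intro h N
      obtain ⟨n, hn, hle⟩ := h (N+1)
      refine ⟨n - 1, by omega, ?_⟩
      have hn1 : n - 1 + 1 = n := by omega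
      show ω ∈ A (n - 1 + 1)
      rw [hn1]
      exact hle
    · intro h N
      obtain ⟨i, hi, hmem⟩ := h N
      exact ⟨i+1, by omega, hmem⟩
  rw [hset]
  have hiInf : P (⋂ N, V N) = ⨅ N, P (V N) :=
    Directed.measure_iInter (fun N => (hVmeas N).nullMeasurableSet)
      (hVanti.directed_ge) ⟨0, measure_ne_top P _⟩
  have hle : (1:ℝ≥0∞)/4 ≤ P (⋂ N, V N) := by
    rw [hiInf]
    exact le_iInf fun N => hmain N
  have := ENNReal.toReal_mono (measure_ne_top P _) hle
  calc (1:ℝ)/4 = ((1:ℝ≥0∞)/4).toReal := by norm_num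
    _ ≤ _ := this
end

section
/- Let (ξ_k)_{k≥1} be i.i.d. random vectors, and for β ≥ 0 define E = {liminf_n S_n·ln ln n ≤ β} where S_n = Σ_{i=1}^n T_i'/r^{2(U_i+⋯+U_n)} with (U_i, T_i') = ξ_i, r > 1, T_i' > 0, U_i ∈ [0,1]. If almost surely (ln ln n)/r^{2(U_1+⋯+U_n)} → 0, then P(E) ∈ {0,1}. -/
open MeasureTheory ProbabilityTheory Filter

lemma liminf_eq_liminf_aux (a b : ℕ → ℝ)
    (h1 : ∀ᶠ n in atTop, b n ≤ a n)
    (h2 : ∀ ε > (0:ℝ), ∀ᶠ n in atTop, a n ≤ b n + ε)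
    (h3 : ∀ᶠ n in atTop, 0 ≤ b n) :
    atTop.liminf a = atTop.liminf b := by
  rw [Filter.liminf_eq, Filter.liminf_eq]
  set A := {x : ℝ | ∀ᶠ n in atTop, x ≤ a n} with hA_def
  set B := {x : ℝ | ∀ᶠ n in atTop, x ≤ b n} with hB_def
  have hBA : B ⊆ A := fun x hx => (hx.and h1).mono fun n ⟨h, h'⟩ => h.trans h'
  have hB0 : (0:ℝ) ∈ B := h3
  have hshift : ∀ x ∈ A, ∀ ε > (0:ℝ), x - ε ∈ B := by
    intro x hx ε hε
    filter_upwards [hx, h2 ε hε] with n hn hn'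
    linarith
  by_cases hA : BddAbove A
  · have hBb : BddAbove B := hA.mono hBA
    apply le_antisymm
    · have h0B : (0:ℝ) ≤ sSup B := le_csSup hBb hB0
      refine Real.sSup_le (fun x hx => ?_) h0B
      by_contra h
      push_neg at h
      have h1' := le_csSup hBb (hshift x hx ((x - sSup B)/2) (by linarith))
      linarith
    · exact csSup_le_csSup hA ⟨0, hB0⟩ hBA
  · have hB : ¬BddAbove B := by
      intro ⟨M, hM⟩
      apply hA
      refine ⟨M + 1, fun x hx => ?_⟩
      have := hM (hshift x hx 1 one_pos)
      linarith
    rw [Real.sSup_of_not_bddAbove hA, Real.sSup_of_not_bddAbove hB]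

lemma shift_liminf_aux (r : ℝ) (hr : 1 < r) (U T : ℕ → ℝ) (hT : ∀ i, 0 < T i)
    (h0 : Tendsto (fun n : ℕ => Real.log (Real.log n) / r ^ (2 * ∑ i ∈ Finset.Icc 1 n, U i))
      atTop (nhds 0)) (k : ℕ) :
    atTop.liminf (fun n : ℕ => (∑ i ∈ Finset.Icc 1 n,
        T i / r ^ (2 * ∑ j ∈ Finset.Icc i n, U j)) * Real.log (Real.log n))
    = atTop.liminf (fun n : ℕ => (∑ i ∈ Finset.Icc (k+1) n,
        T i / r ^ (2 * ∑ j ∈ Finset.Icc i n, U j)) * Real.log (Real.log n)) := by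
  have hr0 : (0:ℝ) < r := lt_trans one_pos hr
  set A : ℕ → ℝ := fun n => ∑ j ∈ Finset.Icc 1 n, U j with hA
  set B : ℕ → ℝ := fun i => ∑ j ∈ Finset.Icc 1 (i-1), U j with hB
  set D : ℝ := ∑ i ∈ Finset.Icc 1 k, T i * r ^ (2 * B i) with hD
  set q : ℕ → ℝ := fun n => Real.log (Real.log n) / r ^ (2 * A n) with hq
  have hIcc : ∀ m : ℕ, Finset.Icc 1 m = Finset.Ioc 0 m := fun m => Finset.Icc_add_one_left_eq_Ioc 0 m
  have hD0 : 0 ≤ D := Finset.sum_nonneg fun i _ =>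
    mul_nonneg (hT i).le (Real.rpow_nonneg hr0.le _)
  have hln : ∀ n : ℕ, 3 ≤ n → 0 ≤ Real.log (Real.log n) := by
    intro n hn
    have h3n : (3:ℝ) ≤ n := by exact_mod_cast hn
    have he : Real.exp 1 ≤ 3 := le_of_lt (lt_trans Real.exp_one_lt_d9 (by norm_num))
    refine Real.log_nonneg ?_
    calc (1:ℝ) = Real.log (Real.exp 1) := (Real.log_exp 1).symm
    _ ≤ Real.log n := Real.log_le_log (Real.exp_pos 1) (le_trans he h3n)
  have key : ∀ n : ℕ, k ≤ n →
      (∑ i ∈ Finset.Icc 1 n, T i / r ^ (2 * ∑ j ∈ Finset.Icc i n, U j))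
        * Real.log (Real.log n)
      = (∑ i ∈ Finset.Icc (k+1) n, T i / r ^ (2 * ∑ j ∈ Finset.Icc i n, U j))
        * Real.log (Real.log n) + D * q n := by
    intro n hkn
    have hsplit : ∑ i ∈ Finset.Icc 1 n, T i / r ^ (2 * ∑ j ∈ Finset.Icc i n, U j)
        = ∑ i ∈ Finset.Icc 1 k, T i / r ^ (2 * ∑ j ∈ Finset.Icc i n, U j)
          + ∑ i ∈ Finset.Icc (k+1) n, T i / r ^ (2 * ∑ j ∈ Finset.Icc i n, U j) := by
      rw [hIcc, hIcc, Finset.Icc_add_one_left_eq_Ioc]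
      exact (Finset.sum_Ioc_consecutive _ (Nat.zero_le k) hkn).symm
    have hterm : ∀ i ∈ Finset.Icc 1 k,
        T i / r ^ (2 * ∑ j ∈ Finset.Icc i n, U j) = T i * r ^ (2 * B i) / r ^ (2 * A n) := by
      intro i hi
      obtain ⟨hi1, hik⟩ := Finset.mem_Icc.1 hi
      have h1 : Finset.Icc i n = Finset.Ioc (i-1) n := by
        rw [← Finset.Icc_add_one_left_eq_Ioc]; congr 1; omega
      have hsum2 : B i + ∑ j ∈ Finset.Icc i n, U j = A n := by
        show (∑ j ∈ Finset.Icc 1 (i-1), U j) + ∑ j ∈ Finset.Icc i n, U j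
          = ∑ j ∈ Finset.Icc 1 n, U j
        rw [h1, hIcc, hIcc]
        exact Finset.sum_Ioc_consecutive U (Nat.zero_le (i-1)) (by omega)
      have h2 : (2 : ℝ) * ∑ j ∈ Finset.Icc i n, U j = 2 * A n - 2 * B i := by
        rw [← hsum2]; ring
      rw [h2, Real.rpow_sub hr0, div_div_eq_mul_div]
    rw [hsplit, Finset.sum_congr rfl hterm, add_mul, add_comm, ← Finset.sum_div, ← hD]
    congr 1
    simp only [hq]
    rw [div_mul_eq_mul_div, mul_div_assoc]
  have hDq : Tendsto (fun n => D * q n) atTop (nhds 0) := by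
    simpa using h0.const_mul D
  have hq0 : ∀ n : ℕ, 3 ≤ n → 0 ≤ q n := fun n hn =>
    div_nonneg (hln n hn) (Real.rpow_nonneg hr0.le _)
  refine liminf_eq_liminf_aux _ _ ?_ ?_ ?_
  · filter_upwards [eventually_ge_atTop k, eventually_ge_atTop 3] with n hkn h3n
    have := mul_nonneg hD0 (hq0 n h3n)
    rw [key n hkn]; linarith
  · intro ε hε
    have hev : ∀ᶠ n in atTop, D * q n < ε := hDq.eventually_lt_const hε
    filter_upwards [eventually_ge_atTop k, hev] with n hkn hn
    rw [key n hkn]; linarith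
  · filter_upwards [eventually_ge_atTop 3] with n h3n
    refine mul_nonneg (Finset.sum_nonneg fun i _ => div_nonneg (hT i).le
      (Real.rpow_nonneg hr0.le _)) (hln n h3n)

/-- Kolmogorov 0–1 law for E = {liminf_n S_n·ln ln n ≤ β}, where
S_n = Σ_{i=1}^n T_i'/r^{2(U_i+⋯+U_n)} is built from the i.i.d. sequence ξ_i = (U_i, T_i'),
assuming a.s. (ln ln n)/r^{2(U_1+⋯+U_n)} → 0. -/
theorem stmt19 {Ω : Type*} [MeasurableSpace Ω] (P : Measure Ω) [IsProbabilityMeasure P]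
    (ξ : ℕ → Ω → ℝ × ℝ) (hmeas : ∀ i, Measurable (ξ i))
    (hindep : iIndepFun ξ P)
    (hident : ∀ i, IdentDistrib (ξ i) (ξ 1) P P)
    (r : ℝ) (hr : 1 < r)
    (hU : ∀ i, ∀ᵐ ω ∂P, (ξ i ω).1 ∈ Set.Icc (0:ℝ) 1)
    (hT : ∀ i, ∀ᵐ ω ∂P, 0 < (ξ i ω).2)
    (S : ℕ → Ω → ℝ)
    (hS : ∀ n ω, S n ω = ∑ i ∈ Finset.Icc 1 n,
      (ξ i ω).2 / r ^ (2 * ∑ j ∈ Finset.Icc i n, (ξ j ω).1))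
    (h0 : ∀ᵐ ω ∂P, Filter.Tendsto
      (fun n : ℕ => Real.log (Real.log n) / r ^ (2 * ∑ i ∈ Finset.Icc 1 n, (ξ i ω).1))
      Filter.atTop (nhds 0))
    (β : ℝ) (hβ : 0 ≤ β) :
    P {ω | Filter.atTop.liminf (fun n : ℕ => S n ω * Real.log (Real.log n)) ≤ β} = 0 ∨
    P {ω | Filter.atTop.liminf (fun n : ℕ => S n ω * Real.log (Real.log n)) ≤ β} = 1 := by
  set s : ℕ → MeasurableSpace Ω := fun i => MeasurableSpace.comap (ξ i) inferInstance with hs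
  set Lk : ℕ → Ω → ℝ := fun k ω => atTop.liminf (fun n : ℕ => (∑ i ∈ Finset.Icc (k+1) n,
      (ξ i ω).2 / r ^ (2 * ∑ j ∈ Finset.Icc i n, (ξ j ω).1)) * Real.log (Real.log n)) with hLk
  set Ek : ℕ → Set Ω := fun k => {ω | Lk k ω ≤ β} with hEk
  set E' : Set Ω := ⋂ m, ⋃ k, ⋃ _ : m ≤ k, Ek k with hE'
  have h_le : ∀ i, s i ≤ (inferInstance : MeasurableSpace Ω) := fun i => (hmeas i).comap_le
  have hrpow : Continuous fun y : ℝ => r ^ y := by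
    have h0' : (0:ℝ) < r := lt_trans one_pos hr
    have : (fun y : ℝ => r ^ y) = fun y => Real.exp (Real.log r * y) :=
      funext fun y => Real.rpow_def_of_pos h0' y
    rw [this]; exact Real.continuous_exp.comp (continuous_const.mul continuous_id)
  have ht_tail : MeasurableSet[Filter.atTop.limsup s] E' := by
    rw [Filter.limsup_eq_iInf_iSup_of_nat, MeasurableSpace.measurableSet_iInf]
    intro n
    set M := ⨆ i ≥ n, s i with hM
    have hξM : ∀ i, n ≤ i → Measurable[M] (ξ i) := fun i hi =>
      measurable_iff_comap_le.2 (le_iSup₂ (f := fun i (_ : n ≤ i) => s i) i hi)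
    have hLkM : ∀ k, n ≤ k → Measurable[M] (Lk k) := by
      intro k hk
      apply Measurable.liminf
      intro m
      apply Measurable.mul _ measurable_const
      apply Finset.measurable_sum
      intro i hi
      have hni : n ≤ i := le_trans hk (le_trans (Nat.le_succ k) (Finset.mem_Icc.1 hi).1)
      refine Measurable.div (measurable_snd.comp (hξM i hni)) ?_
      refine hrpow.measurable.comp (Measurable.const_mul ?_ 2)
      exact Finset.measurable_sum _ fun j hj =>
        measurable_fst.comp (hξM j (le_trans hni (Finset.mem_Icc.1 hj).1))
    have hEkM : ∀ k, n ≤ k → MeasurableSet[M] (Ek k) := fun k hk =>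
      (hLkM k hk) measurableSet_Iic
    have halt : E' = ⋂ m, ⋃ k, ⋃ _ : max m n ≤ k, Ek k := by
      ext ω
      simp only [hE', Set.mem_iInter, Set.mem_iUnion]
      constructor
      · intro h m
        obtain ⟨k, hk, hω⟩ := h (max m n)
        exact ⟨k, hk, hω⟩
      · intro h m
        obtain ⟨k, hk, hω⟩ := h m
        exact ⟨k, le_trans (le_max_left m n) hk, hω⟩
    rw [halt]
    exact MeasurableSet.iInter fun m => MeasurableSet.iUnion fun k =>
      MeasurableSet.iUnion fun hk => hEkM k (le_trans (le_max_right m n) hk)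
  have h01 := ProbabilityTheory.measure_zero_or_one_of_measurableSet_limsup_atTop
    h_le hindep.iIndep ht_tail
  have hae : {ω | Filter.atTop.liminf (fun n : ℕ => S n ω * Real.log (Real.log n)) ≤ β}
      =ᵐ[P] E' := by
    refine Filter.eventuallyEq_set.2 ?_
    filter_upwards [ae_all_iff.2 hT, h0] with ω hTω h0ω
    have hLeq : ∀ k, Filter.atTop.liminf (fun n : ℕ => S n ω * Real.log (Real.log n))
        = Lk k ω := by
      intro k
      have h := shift_liminf_aux r hr (fun i => (ξ i ω).1) (fun i => (ξ i ω).2) hTω h0ω k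
      simp only [hLk, hS]
      simpa using h
    simp only [Set.mem_setOf_eq, hE', Set.mem_iInter, Set.mem_iUnion, hEk]
    constructor
    · intro hω m
      exact ⟨m, le_rfl, (hLeq m) ▸ hω⟩
    · intro h
      obtain ⟨k, -, hω⟩ := h 0
      exact (hLeq k) ▸ hω
  rw [measure_congr hae]
  exact h01
end
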